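/- arXiv:1711.06749 — 2 statements merged into one kernel-verified Lean document; each statement's English description precedes it below -/
import Mathlib

section
/- For any sequences (aᵢ) in ℕ∪{0} and (bᵢ) in ℕ⁺ with a₀ = 0, the subspace X = ⋃ᵢ (aᵢ + bᵢℕ₀) of the Golomb space is superconnected, i.e., for any finitely many nonempty relatively open subsets U₁,…,Uₙ of X, the intersection of their closures in X is nonempty. -/
/-- The base of the Golomb topology: arithmetic progressions `{a + b*n : n ≥ 0}`
with coprime `a, b ≥ 1`, viewed inside the positive integers. -/
def golombBasis : Set (Set ℕ+) :=
  {S | ∃ a b : ℕ, 1 ≤ a ∧ 1 ≤ b ∧ Nat.Coprime a b ∧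
    S = {x : ℕ+ | ∃ n : ℕ, (x : ℕ) = a + b * n}}

/-- The Golomb (relatively prime integer) topology on `ℕ+`. -/
instance golombTopology : TopologicalSpace ℕ+ :=
  TopologicalSpace.generateFrom golombBasis

/-- A space is superconnected if the closures of any finitely many nonempty
open sets have nonempty intersection. -/
def Superconnected (X : Type*) [TopologicalSpace X] : Prop :=
  ∀ (n : ℕ) (U : Fin n → Set X), (∀ i, IsOpen (U i)) → (∀ i, (U i).Nonempty) →
    (⋂ i, closure (U i)).Nonempty

lemma mem_prog_of_modEq {a b y : ℕ} (hy : a ≤ y) (h : y ≡ a [MOD b]) :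
    ∃ n, y = a + b * n := by
  obtain ⟨n, hn⟩ := (Nat.modEq_iff_dvd' hy).mp h.symm
  exact ⟨n, by omega⟩

lemma golombBasis_isBasis : TopologicalSpace.IsTopologicalBasis golombBasis := by
  refine ⟨?_, ?_, rfl⟩
  · rintro t₁ ⟨c₁, d₁, hc₁, hd₁, hcd₁, rfl⟩ t₂ ⟨c₂, d₂, hc₂, hd₂, hcd₂, rfl⟩ x ⟨⟨m, hm⟩, ⟨k, hk⟩⟩
    refine ⟨{y : ℕ+ | ∃ n, (y : ℕ) = (x : ℕ) + (d₁ * d₂) * n}, ⟨(x : ℕ), d₁ * d₂,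
      x.one_le, Nat.one_le_iff_ne_zero.2 (by positivity), ?_, rfl⟩, ⟨0, by ring⟩, ?_⟩
    · have h1 : Nat.Coprime (x : ℕ) d₁ := by
        rw [hm]; exact (Nat.coprime_add_mul_left_left c₁ d₁ m).2 hcd₁
      have h2 : Nat.Coprime (x : ℕ) d₂ := by
        rw [hk]; exact (Nat.coprime_add_mul_left_left c₂ d₂ k).2 hcd₂
      exact h1.mul_right h2
    · rintro y ⟨n, hn⟩
      exact ⟨⟨m + d₂ * n, by rw [hn, hm]; ring⟩, ⟨k + d₁ * n, by rw [hn, hk]; ring⟩⟩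
  · apply Set.eq_univ_of_forall
    intro x
    exact ⟨{y : ℕ+ | ∃ n, (y : ℕ) = (x : ℕ) + 1 * n},
      ⟨(x : ℕ), 1, x.one_le, le_refl 1, Nat.coprime_one_right _, rfl⟩, 0, by ring⟩

theorem superconnected_union_of_progressions (a : ℕ → ℕ) (b : ℕ → ℕ)
    (hb : ∀ i, 1 ≤ b i) (ha0 : a 0 = 0) :
    Superconnected ↥(⋃ i : ℕ, {x : ℕ+ | ∃ n : ℕ, (x : ℕ) = a i + b i * n}) := by
  intro N U hUopen hUne
  -- pick a point in each U i
  choose p hp using hUne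
  -- for each i, a basic open set around p i inside (the trace of) U i
  have key : ∀ i : Fin N, ∃ (c d : ℕ) (V : Set ℕ+), 1 ≤ c ∧ 1 ≤ d ∧ Nat.Coprime c d ∧
      IsOpen V ∧ Subtype.val ⁻¹' V = U i ∧
      (∃ m, ((p i : ℕ+) : ℕ) = c + d * m) ∧
      {x : ℕ+ | ∃ n : ℕ, (x : ℕ) = c + d * n} ⊆ V := by
    intro i
    obtain ⟨V, hVopen, hVU⟩ := isOpen_induced_iff.mp (hUopen i)
    have hpV : ((p i : ℕ+)) ∈ V := by
      have := hp i; rw [← hVU] at this; exact this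
    obtain ⟨t, ht, hpt, htV⟩ := golombBasis_isBasis.exists_subset_of_mem_open hpV hVopen
    obtain ⟨c, d, hc, hd, hcd, rfl⟩ := ht
    exact ⟨c, d, V, hc, hd, hcd, hVopen, hVU, hpt, htV⟩
  choose c d V hc hd hcd hVopen hVU hpm hBV using key
  -- for each i, the progression from the union that contains p i
  have key2 : ∀ i : Fin N, ∃ (j m : ℕ), ((p i : ℕ+) : ℕ) = a j + b j * m := by
    intro i
    have := (p i).2
    rw [Set.mem_iUnion] at this
    obtain ⟨j, m, hm⟩ := this
    exact ⟨j, m, hm⟩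
  choose j m hjm using key2
  -- the candidate common closure point
  set P : ℕ := ∏ i : Fin N, (d i * b (j i)) with hP
  have hPpos : 0 < P := Finset.prod_pos fun i _ => Nat.mul_pos (hd i) (hb (j i))
  set M : ℕ := b 0 * P with hM
  have hMpos : 0 < M := Nat.mul_pos (hb 0) hPpos
  have hxX : (⟨M, hMpos⟩ : ℕ+) ∈ ⋃ i : ℕ, {x : ℕ+ | ∃ n : ℕ, (x : ℕ) = a i + b i * n} := by
    refine Set.mem_iUnion.mpr ?_
    exact ⟨0, P, by simp [ha0, hM]⟩
  refine ⟨⟨⟨M, hMpos⟩, hxX⟩, ?_⟩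
  rw [Set.mem_iInter]
  intro i
  rw [mem_closure_iff]
  intro o hoopen hxo
  obtain ⟨W, hWopen, hWo⟩ := isOpen_induced_iff.mp hoopen
  have hxW : (⟨M, hMpos⟩ : ℕ+) ∈ W := by rw [← hWo] at hxo; exact hxo
  obtain ⟨t, ht, hxt, htW⟩ := golombBasis_isBasis.exists_subset_of_mem_open hxW hWopen
  obtain ⟨c', d', hc', hd', hcd', rfl⟩ := ht
  obtain ⟨k, hk⟩ := hxt
  simp only [PNat.mk_coe] at hk
  -- coprimality of d' and d i * b (j i)
  have hDdvdM : d i * b (j i) ∣ M :=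
    Dvd.dvd.mul_left (Finset.dvd_prod_of_mem _ (Finset.mem_univ i)) (b 0)
  have hcop : Nat.Coprime d' (d i * b (j i)) := by
    have hg1 : Nat.gcd d' (d i * b (j i)) ∣ c' := by
      have h1 : Nat.gcd d' (d i * b (j i)) ∣ M :=
        (Nat.gcd_dvd_right _ _).trans hDdvdM
      have h2 : Nat.gcd d' (d i * b (j i)) ∣ d' * k :=
        Dvd.dvd.mul_right (Nat.gcd_dvd_left _ _) k
      have := Nat.dvd_sub h1 h2
      rwa [hk, Nat.add_sub_cancel] at this
    have : Nat.gcd d' (d i * b (j i)) ∣ Nat.gcd c' d' :=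
      Nat.dvd_gcd hg1 (Nat.gcd_dvd_left _ _)
    rw [hcd'] at this
    exact Nat.dvd_one.mp this
  -- Chinese remainder
  obtain ⟨y₀, hy₁, hy₂⟩ := Nat.chineseRemainder hcop c' ((p i : ℕ+) : ℕ)
  set T : ℕ := c' + c i + a (j i) + 1 with hT
  set y : ℕ := y₀ + (d' * (d i * b (j i))) * T with hy
  have hLpos : 1 ≤ d' * (d i * b (j i)) :=
    Nat.mul_pos hd' (Nat.mul_pos (hd i) (hb (j i)))
  have hyT : T ≤ y := by
    have : T ≤ (d' * (d i * b (j i))) * T := Nat.le_mul_of_pos_left T hLpos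
    omega
  have hypos : 0 < y := by omega
  have hymod1 : y ≡ y₀ [MOD d'] := by
    refine ((Nat.modEq_iff_dvd' (by omega)).mpr ?_).symm
    exact ⟨(d i * b (j i)) * T, by rw [hy]; ring_nf; omega⟩
  have hymod2 : y ≡ y₀ [MOD d i * b (j i)] := by
    refine ((Nat.modEq_iff_dvd' (by omega)).mpr ?_).symm
    exact ⟨d' * T, by rw [hy]; ring_nf; omega⟩
  -- y is in the basic set around x
  have hyc' : ∃ n, y = c' + d' * n :=
    mem_prog_of_modEq (by omega) (hymod1.trans hy₁)
  -- y is ≡ p i mod d i and mod b (j i)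
  have hyp : y ≡ ((p i : ℕ+) : ℕ) [MOD d i * b (j i)] := hymod2.trans hy₂
  obtain ⟨mi, hmi⟩ := hpm i
  have hyci : ∃ n, y = c i + d i * n := by
    refine mem_prog_of_modEq (by omega) ?_
    have h1 : y ≡ ((p i : ℕ+) : ℕ) [MOD d i] :=
      Nat.ModEq.of_dvd (Dvd.intro _ rfl) hyp
    have h2 : ((p i : ℕ+) : ℕ) ≡ c i [MOD d i] :=
      ((Nat.modEq_iff_dvd' (by omega)).mpr ⟨mi, by omega⟩).symm
    exact h1.trans h2
  have hji := hjm i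
  have hyaj : ∃ n, y = a (j i) + b (j i) * n := by
    refine mem_prog_of_modEq (by omega) ?_
    have h1 : y ≡ ((p i : ℕ+) : ℕ) [MOD b (j i)] :=
      Nat.ModEq.of_dvd (Dvd.intro_left _ rfl) hyp
    have h2 : ((p i : ℕ+) : ℕ) ≡ a (j i) [MOD b (j i)] :=
      ((Nat.modEq_iff_dvd' (by omega)).mpr ⟨m i, by omega⟩).symm
    exact h1.trans h2
  -- assemble the point
  have hyX : (⟨y, hypos⟩ : ℕ+) ∈ ⋃ i : ℕ, {x : ℕ+ | ∃ n : ℕ, (x : ℕ) = a i + b i * n} := by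
    refine Set.mem_iUnion.mpr ?_
    obtain ⟨n, hn⟩ := hyaj
    exact ⟨j i, n, hn⟩
  refine ⟨⟨⟨y, hypos⟩, hyX⟩, ?_, ?_⟩
  · rw [← hWo]
    exact htW (by obtain ⟨n, hn⟩ := hyc'; exact ⟨n, hn⟩)
  · rw [← hVU i]
    exact hBV i (by obtain ⟨n, hn⟩ := hyci; exact ⟨n, hn⟩)
end

section
/- The set of continuous self-maps of the Golomb space has cardinality continuum; in fact the set of increasing progressive functions ℕ⁺ → ℕ⁺ is a closed subset of ℕ^ℕ of cardinality continuum consisting of continuous maps. -/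
def dag (x y : ℕ) : ℕ :=
  (Nat.factorization x).prod fun p k => if p ∣ y then 1 else p ^ k

def Progressive (f : ℕ+ → ℕ+) : Prop :=
  (∀ x : ℕ+, ∀ p : ℕ, p.Prime → p ∣ (x : ℕ) → p ∣ (f x : ℕ)) ∧
  (∀ x y : ℕ+, x < y →
    ((dag ((y : ℕ) - (x : ℕ)) (f x) : ℤ)) ∣ ((f y : ℕ) : ℤ) - ((f x : ℕ) : ℤ))

open Finset Topology

/-! ### Arithmetic lemmas about `dag` -/

lemma dag_dvd (m w : ℕ) : dag m w ∣ m := by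
  rcases eq_or_ne m 0 with rfl | hm
  · exact dvd_zero _
  · conv_rhs => rw [← Nat.factorization_prod_pow_eq_self hm]
    exact Finsupp.prod_dvd_prod_of_subset_of_dvd subset_rfl
      (fun p _ => by split_ifs with h
                     · exact one_dvd _
                     · exact dvd_rfl)

lemma dvd_dag {b m w : ℕ} (hb : b ≠ 0) (hm : m ≠ 0) (hbm : b ∣ m) (hw : Nat.Coprime w b) :
    b ∣ dag m w := by
  conv_lhs => rw [← Nat.factorization_prod_pow_eq_self hb]
  apply Finsupp.prod_dvd_prod_of_subset_of_dvd
  · rw [Nat.support_factorization, Nat.support_factorization]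
    exact Nat.primeFactors_mono hbm hm
  · intro p hp
    rw [Nat.support_factorization, Nat.mem_primeFactors] at hp
    have hpw : ¬ p ∣ w := by
      intro h
      exact hp.1.ne_one (Nat.dvd_one.mp (hw ▸ Nat.dvd_gcd h hp.2.1))
    rw [if_neg hpw]
    exact pow_dvd_pow p (Finsupp.le_def.mp ((Nat.factorization_le_iff_dvd hb hm).2 hbm) p)

/-! ### A continuum-sized family of increasing progressive functions -/

open Classical in
noncomputable def fA (A : Set ℕ) (x : ℕ) : ℕ :=
  x + ∑ k ∈ Finset.range x, if k ∈ A then ∏ j ∈ Finset.range (k + 1), (x - j) else 0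

lemma prod_term_eq_zero {k x : ℕ} (h : x ≤ k) : ∏ j ∈ range (k + 1), (x - j) = 0 :=
  Finset.prod_eq_zero (Finset.mem_range.2 (Nat.lt_succ_of_le h)) (Nat.sub_self x)

open Classical in
lemma fA_extend (A : Set ℕ) {x y : ℕ} (h : x ≤ y) :
    fA A x = x + ∑ k ∈ range y, if k ∈ A then ∏ j ∈ range (k + 1), (x - j) else 0 := by
  unfold fA
  congr 1
  apply Finset.sum_subset (Finset.range_subset_range.2 h)
  intro k _ hk
  rw [Finset.mem_range, not_lt] at hk
  rw [prod_term_eq_zero hk]; split_ifs <;> rfl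

lemma cast_prod_sub (k x : ℕ) :
    ((∏ j ∈ range (k + 1), (x - j) : ℕ) : ℤ) = ∏ j ∈ range (k + 1), ((x : ℤ) - j) := by
  rcases le_or_gt x k with h | h
  · rw [prod_term_eq_zero h,
      Finset.prod_eq_zero (Finset.mem_range.2 (Nat.lt_succ_of_le h)) (sub_self (x:ℤ))]
    simp
  · rw [Nat.cast_prod]
    exact Finset.prod_congr rfl fun j hj =>
      Nat.cast_sub (le_of_lt (lt_of_lt_of_le (Finset.mem_range.1 hj) h))

lemma prod_sub_dvd (s : Finset ℕ) (x y : ℤ) :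
    (y - x) ∣ (∏ j ∈ s, (y - j)) - ∏ j ∈ s, (x - j) := by
  induction s using Finset.induction_on with
  | empty => simp
  | insert a s ha ih =>
    rw [Finset.prod_insert ha, Finset.prod_insert ha]
    have : (y - a) * (∏ j ∈ s, (y - j)) - (x - a) * ∏ j ∈ s, (x - j)
        = (y - a) * ((∏ j ∈ s, (y - j)) - ∏ j ∈ s, (x - j)) + (y - x) * ∏ j ∈ s, (x - j) := by
      ring
    rw [this]
    exact dvd_add (Dvd.dvd.mul_left ih _) (Dvd.dvd.mul_right dvd_rfl _)

open Classical in
lemma fA_strictMono (A : Set ℕ) {x y : ℕ} (h : x < y) : fA A x < fA A y := by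
  rw [fA_extend A h.le]
  unfold fA
  apply Nat.add_lt_add_of_lt_of_le h
  apply Finset.sum_le_sum
  intro k _
  split_ifs
  · exact Finset.prod_le_prod (fun _ _ => Nat.zero_le _)
      (fun j _ => Nat.sub_le_sub_right h.le j)
  · exact le_rfl

open Classical in
lemma fA_dvd (A : Set ℕ) (x : ℕ) : x ∣ fA A x := by
  unfold fA
  apply dvd_add dvd_rfl
  apply Finset.dvd_sum
  intro k _
  split_ifs
  · have h0 : (0 : ℕ) ∈ Finset.range (k + 1) := Finset.mem_range.2 (Nat.succ_pos k)
    have := Finset.dvd_prod_of_mem (fun j => x - j) h0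
    simpa using this
  · exact dvd_zero x

open Classical in
lemma fA_diff_dvd (A : Set ℕ) {x y : ℕ} (h : x < y) :
    ((y : ℤ) - x) ∣ (fA A y : ℤ) - (fA A x : ℤ) := by
  rw [fA_extend A h.le]
  unfold fA
  simp only [Nat.cast_add, Nat.cast_sum, apply_ite (Nat.cast : ℕ → ℤ), Nat.cast_zero,
    cast_prod_sub]
  have : ((y:ℤ) + ∑ k ∈ range y, (if k ∈ A then ∏ j ∈ range (k+1), ((y:ℤ) - j) else 0))
      - ((x:ℤ) + ∑ k ∈ range y, (if k ∈ A then ∏ j ∈ range (k+1), ((x:ℤ) - j) else 0))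
      = ((y:ℤ) - x) + ∑ k ∈ range y,
          ((if k ∈ A then ∏ j ∈ range (k+1), ((y:ℤ) - j) else 0)
            - (if k ∈ A then ∏ j ∈ range (k+1), ((x:ℤ) - j) else 0)) := by
    rw [Finset.sum_sub_distrib]; ring
  rw [this]
  apply dvd_add dvd_rfl
  apply Finset.dvd_sum
  intro k _
  split_ifs
  · exact prod_sub_dvd _ _ _
  · simp

open Classical in
lemma fA_inj : Function.Injective fA := by
  intro A B hAB
  ext k
  induction k using Nat.strong_induction_on with
  | _ k ih =>
    have h1 : fA A (k + 1) = fA B (k + 1) := by rw [hAB]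
    unfold fA at h1
    rw [Finset.sum_range_succ, Finset.sum_range_succ] at h1
    have h2 : ∑ j ∈ range k, (if j ∈ A then ∏ i ∈ range (j+1), (k + 1 - i) else 0)
        = ∑ j ∈ range k, (if j ∈ B then ∏ i ∈ range (j+1), (k + 1 - i) else 0) := by
      apply Finset.sum_congr rfl
      intro j hj
      have := ih j (Finset.mem_range.1 hj)
      by_cases hjA : j ∈ A
      · rw [if_pos hjA, if_pos (this.mp hjA)]
      · rw [if_neg hjA, if_neg (fun hB => hjA (this.mpr hB))]
    rw [h2] at h1
    have h3 : (if k ∈ A then ∏ i ∈ range (k+1), (k + 1 - i) else 0)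
        = (if k ∈ B then ∏ i ∈ range (k+1), (k + 1 - i) else 0) := by omega
    have hc : 0 < ∏ i ∈ range (k+1), (k + 1 - i) := by
      apply Finset.prod_pos
      intro i hi
      have := Finset.mem_range.1 hi
      omega
    constructor <;> intro hmem
    · by_contra hB
      rw [if_pos hmem, if_neg hB] at h3; omega
    · by_contra hA
      rw [if_neg hA, if_pos hmem] at h3; omega

lemma le_fA (A : Set ℕ) (x : ℕ) : x ≤ fA A x := by
  unfold fA; exact Nat.le_add_right _ _

noncomputable def FA (A : Set ℕ) : ℕ+ → ℕ+ :=
  fun x => ⟨fA A (x : ℕ), lt_of_lt_of_le x.pos (le_fA A _)⟩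

lemma FA_strictMono (A : Set ℕ) : StrictMono (FA A) := by
  intro x y h
  have : (FA A x : ℕ) < (FA A y : ℕ) := fA_strictMono A ((PNat.coe_lt_coe _ _).mpr h)
  exact (PNat.coe_lt_coe _ _).mp this

lemma FA_progressive (A : Set ℕ) : Progressive (FA A) := by
  constructor
  · intro x p _ hpx
    exact hpx.trans (fA_dvd A x)
  · intro x y hxy
    have hxy' : (x:ℕ) < (y:ℕ) := (PNat.coe_lt_coe _ _).mpr hxy
    have h1 : (dag ((y:ℕ) - (x:ℕ)) (FA A x) : ℤ) ∣ (((y:ℕ) - (x:ℕ) : ℕ) : ℤ) :=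
      Int.natCast_dvd_natCast.mpr (dag_dvd _ _)
    rw [Nat.cast_sub hxy'.le] at h1
    exact h1.trans (fA_diff_dvd A hxy')

lemma FA_inj : Function.Injective FA := by
  intro A B h
  apply fA_inj
  funext n
  cases n with
  | zero => unfold fA; simp
  | succ n =>
    have := congrFun h ⟨n + 1, Nat.succ_pos n⟩
    exact congrArg PNat.val this

/-! ### Continuity of increasing progressive functions -/

lemma progressive_continuous {f : ℕ+ → ℕ+} (hm : StrictMono f) (hp : Progressive f) :
    Continuous f := by
  have : Continuous[golombTopology, TopologicalSpace.generateFrom golombBasis] f := by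
    rw [continuous_generateFrom_iff]
    rintro S ⟨a, b, ha, hb, hab, rfl⟩
    rw [isOpen_iff_forall_mem_open]
    rintro x hx
    obtain ⟨n₀, hn₀⟩ := hx
    have hfxb : Nat.Coprime (f x : ℕ) b := by
      rw [hn₀, Nat.coprime_add_mul_left_left]; exact hab
    have hxb : Nat.Coprime (x : ℕ) b := by
      by_contra hcop
      obtain ⟨p, hprime, hpd⟩ := Nat.exists_prime_and_dvd (fun h1 => hcop h1)
      have hpx : p ∣ (x:ℕ) := hpd.trans (Nat.gcd_dvd_left _ _)
      have hpb : p ∣ b := hpd.trans (Nat.gcd_dvd_right _ _)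
      have hpfx : p ∣ (f x : ℕ) := hp.1 x p hprime hpx
      exact hprime.ne_one (Nat.dvd_one.mp (hfxb ▸ Nat.dvd_gcd hpfx hpb))
    refine ⟨{z : ℕ+ | ∃ n : ℕ, (z:ℕ) = (x:ℕ) + b * n}, ?_, ?_, ⟨0, by simp⟩⟩
    · rintro z ⟨n, hzn⟩
      rcases Nat.eq_zero_or_pos n with rfl | hn
      · have : z = x := PNat.coe_injective (by simpa using hzn)
        rw [this]; exact ⟨n₀, hn₀⟩
      · have hxz : x < z := by
          rw [← PNat.coe_lt_coe, hzn]
          have : 0 < b * n := Nat.mul_pos hb hn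
          omega
        have hd : (z:ℕ) - (x:ℕ) = b * n := by
          have := hzn; omega
        have hbd : b ∣ dag ((z:ℕ) - (x:ℕ)) (f x) := by
          rw [hd]
          exact dvd_dag (by omega) (by positivity) (dvd_mul_right b n) hfxb
        have h2 := hp.2 x z hxz
        have hbz : (b:ℤ) ∣ ((f z : ℕ) : ℤ) - ((f x : ℕ) : ℤ) :=
          (Int.natCast_dvd_natCast.mpr hbd).trans h2
        have hle : (f x : ℕ) ≤ (f z : ℕ) := (PNat.coe_le_coe _ _).mpr (hm hxz).le
        have hfa : ((f x : ℕ) : ℤ) - a = b * n₀ := by rw [hn₀]; push_cast; ring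
        obtain ⟨t, ht⟩ := hbz
        have hbz' : ((f z : ℕ) : ℤ) - a = b * (t + n₀) := by
          have : ((f z : ℕ) : ℤ) - a = (((f z : ℕ) : ℤ) - (f x : ℕ)) + (((f x : ℕ) : ℤ) - a) := by
            ring
          rw [this, ht, hfa]; ring
        have hage : (a : ℤ) ≤ ((f z : ℕ) : ℤ) := by
          have h5 : (a : ℤ) ≤ ((f x : ℕ) : ℤ) := by
            rw [hn₀]; push_cast; nlinarith [Nat.zero_le (b * n₀)]
          have h6 : ((f x : ℕ) : ℤ) ≤ ((f z : ℕ) : ℤ) := by exact_mod_cast hle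
          linarith
        have ht0 : 0 ≤ t + n₀ := by
          have h7 : (0:ℤ) ≤ (b:ℤ) * (t + n₀) := by rw [← hbz']; linarith
          have hbpos : (0:ℤ) < b := by exact_mod_cast hb
          nlinarith
        refine ⟨(t + n₀).toNat, ?_⟩
        have h8 : ((f z : ℕ) : ℤ) = a + b * ((t + n₀).toNat : ℤ) := by
          rw [Int.toNat_of_nonneg ht0]; linarith [hbz']
        exact_mod_cast h8
    · exact TopologicalSpace.isOpen_generateFrom_of_mem ⟨(x:ℕ), b, x.pos, hb, hxb, rfl⟩
  exact this

/-! ### The main theorem -/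

theorem continuous_selfmaps_continuum :
    @IsClosed (ℕ+ → ℕ+) (@Pi.topologicalSpace ℕ+ (fun _ => ℕ+) (fun _ => ⊥))
      {f : ℕ+ → ℕ+ | StrictMono f ∧ Progressive f} ∧
    Cardinal.mk ↥{f : ℕ+ → ℕ+ | StrictMono f ∧ Progressive f} = Cardinal.continuum ∧
    (∀ f : ℕ+ → ℕ+, StrictMono f ∧ Progressive f → Continuous f) ∧
    Cardinal.mk ↥{f : ℕ+ → ℕ+ | Continuous f} = Cardinal.continuum := by
  have hmkfun : Cardinal.mk (ℕ+ → ℕ+) = Cardinal.continuum := by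
    rw [← Cardinal.power_def, Cardinal.mk_eq_aleph0 ℕ+, Cardinal.aleph0_power_aleph0]
  have hcard : ∀ (s : Set (ℕ+ → ℕ+)), (∀ A : Set ℕ, FA A ∈ s) →
      Cardinal.mk ↥s = Cardinal.continuum := by
    intro s hs
    apply le_antisymm
    · exact (Cardinal.mk_subtype_le _).trans_eq hmkfun
    · have hle : Cardinal.mk (Set ℕ) ≤ Cardinal.mk ↥s :=
        Cardinal.mk_le_of_injective (f := fun A : Set ℕ => (⟨FA A, hs A⟩ : ↥s))
          (fun A B hAB => FA_inj (congrArg Subtype.val hAB))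
      have : Cardinal.mk (Set ℕ) = Cardinal.continuum := by
        rw [Cardinal.mk_set, Cardinal.mk_nat, Cardinal.two_power_aleph0]
      rwa [this] at hle
  refine ⟨?_, ?_, ?_, ?_⟩
  · -- closedness
    letI : TopologicalSpace ℕ+ := ⊥
    haveI : DiscreteTopology ℕ+ := ⟨rfl⟩
    show IsClosed {f : ℕ+ → ℕ+ | StrictMono f ∧ Progressive f}
    have hset : {f : ℕ+ → ℕ+ | StrictMono f ∧ Progressive f} =
        (⋂ (x : ℕ+) (y : ℕ+), {f : ℕ+ → ℕ+ | x < y → f x < f y}) ∩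
        ((⋂ (x : ℕ+) (p : ℕ), {f : ℕ+ → ℕ+ | p.Prime → p ∣ (x:ℕ) → p ∣ (f x : ℕ)}) ∩
         (⋂ (x : ℕ+) (y : ℕ+), {f : ℕ+ → ℕ+ | x < y →
            ((dag ((y:ℕ) - (x:ℕ)) (f x) : ℤ)) ∣ ((f y : ℕ) : ℤ) - ((f x : ℕ) : ℤ)})) := by
      ext f
      simp only [Set.mem_setOf_eq, Set.mem_inter_iff, Set.mem_iInter, Progressive, StrictMono]
    rw [hset]
    have key : ∀ (x y : ℕ+) (P : ℕ+ → ℕ+ → Prop), IsClosed {f : ℕ+ → ℕ+ | P (f x) (f y)} := by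
      intro x y P
      have heq : {f : ℕ+ → ℕ+ | P (f x) (f y)}
          = (fun f : ℕ+ → ℕ+ => (f x, f y)) ⁻¹' {q : ℕ+ × ℕ+ | P q.1 q.2} := rfl
      rw [heq]
      exact IsClosed.preimage ((continuous_apply x).prodMk (continuous_apply y))
        (isClosed_discrete {q : ℕ+ × ℕ+ | P q.1 q.2})
    refine IsClosed.inter ?_ (IsClosed.inter ?_ ?_)
    · exact isClosed_iInter fun x => isClosed_iInter fun y =>
        key x y (fun u v => x < y → u < v)
    · refine isClosed_iInter fun x => isClosed_iInter fun p => ?_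
      have heq : {f : ℕ+ → ℕ+ | p.Prime → p ∣ (x:ℕ) → p ∣ (f x : ℕ)}
          = (fun f : ℕ+ → ℕ+ => f x) ⁻¹' {u : ℕ+ | p.Prime → p ∣ (x:ℕ) → p ∣ (u:ℕ)} := rfl
      rw [heq]
      exact IsClosed.preimage (continuous_apply x)
        (isClosed_discrete {u : ℕ+ | p.Prime → p ∣ (x:ℕ) → p ∣ (u:ℕ)})
    · exact isClosed_iInter fun x => isClosed_iInter fun y =>
        key x y (fun u v =>
          x < y → ((dag ((y:ℕ) - (x:ℕ)) u : ℤ)) ∣ ((v : ℕ) : ℤ) - ((u : ℕ) : ℤ))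
  · exact hcard _ (fun A => ⟨FA_strictMono A, FA_progressive A⟩)
  · exact fun f hf => progressive_continuous hf.1 hf.2
  · exact hcard _ (fun A => progressive_continuous (FA_strictMono A) (FA_progressive A))
end
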